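/- Let g be the 8-dimensional nilpotent Lie algebra with structure (0,0,12,13,14,15,16,36−45−27), i.e. de₁=de₂=0, de₃=e₁∧e₂, de₄=e₁∧e₃, de₅=e₁∧e₄, de₆=e₁∧e₅, de₇=e₁∧e₆, de₈=e₃∧e₆−e₄∧e₅−e₂∧e₇. Then the space of closed 2-forms modulo exact 2-forms, H²(g,ℝ), is 3-dimensional, spanned by the classes of e₂∧e₃, e₃∧e₄−e₂∧e₅, and e₁∧e₇. -/

import Mathlib

/- STATEMENT 12: for the 8-dimensional nilpotent Lie algebra
`(0,0,12,13,14,15,16,36−45−27)`, the second Lie algebra cohomology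
`H²(g,ℝ) = ker(d|Λ²)/im(d|Λ¹)` is 3-dimensional, spanned by the classes of
`e₂∧e₃`, `e₃∧e₄−e₂∧e₅` and `e₁∧e₇`.  Forms are modelled in `Λ•g*` with
`g* = Fin 8 → ℝ`. -/

noncomputable section

open ExteriorAlgebra

/-- The basis 1-forms `e₁,…,e₈` (0-indexed). -/
def e (i : Fin 8) : ExteriorAlgebra ℝ (Fin 8 → ℝ) := ι ℝ (Pi.single i 1)

/-- The values of `d` on the basis: `(0,0,12,13,14,15,16,36−45−27)` (0-indexed). -/
def D : Fin 8 → ExteriorAlgebra ℝ (Fin 8 → ℝ) :=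
  ![0, 0, e 0 * e 1, e 0 * e 2, e 0 * e 3, e 0 * e 4, e 0 * e 5,
    e 2 * e 5 - e 3 * e 4 - e 1 * e 6]

/-- `d` on 1-forms, extended linearly from the basis. -/
def dOne : (Fin 8 → ℝ) →ₗ[ℝ] ExteriorAlgebra ℝ (Fin 8 → ℝ) :=
  (Pi.basisFun ℝ (Fin 8)).constr ℝ D

/-- The 2-form `∑ k_{ij} e_i ∧ e_j` with coefficients `k`. -/
def twoForm (k : Fin 8 → Fin 8 → ℝ) : ExteriorAlgebra ℝ (Fin 8 → ℝ) :=
  ∑ i, ∑ j, k i j • (e i * e j)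

/-- `d` of the 2-form with coefficients `k`. -/
def dTwo (k : Fin 8 → Fin 8 → ℝ) : ExteriorAlgebra ℝ (Fin 8 → ℝ) :=
  ∑ i, ∑ j, k i j • (D i * e j - e i * D j)

/-- Coefficients of the generator `e₂∧e₃` (0-indexed `e₁∧e₂`). -/
def k1 : Fin 8 → Fin 8 → ℝ := fun i j => if i = 1 ∧ j = 2 then 1 else 0

/-- Coefficients of the generator `e₃∧e₄ − e₂∧e₅`. -/
def k2 : Fin 8 → Fin 8 → ℝ := fun i j =>
  if i = 2 ∧ j = 3 then 1 else if i = 1 ∧ j = 4 then -1 else 0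

/-- Coefficients of the generator `e₁∧e₇`. -/
def k3 : Fin 8 → Fin 8 → ℝ := fun i j => if i = 0 ∧ j = 6 then 1 else 0


lemma esq' (i : Fin 8) : e i * e i = 0 := ι_sq_zero _

lemma esq (i : Fin 8) (x : ExteriorAlgebra ℝ (Fin 8 → ℝ)) : e i * (e i * x) = 0 := by
  rw [← mul_assoc, esq', zero_mul]

lemma esw (i j : Fin 8) : e j * e i = -(e i * e j) := by
  rw [eq_neg_iff_add_eq_zero, add_comm]; exact ι_add_mul_swap _ _

lemma eswx (i j : Fin 8) (x : ExteriorAlgebra ℝ (Fin 8 → ℝ)) :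
    e j * (e i * x) = -(e i * (e j * x)) := by
  rw [← mul_assoc, esw i j, neg_mul, mul_assoc]

def dd (i j : Fin 8) : ℝ := if i = j then 1 else 0

def phi3 (a b c : Fin 8) : ExteriorAlgebra ℝ (Fin 8 → ℝ) →ₗ[ℝ] ℝ :=
  liftAlternating (fun n => match n with
    | 3 => Matrix.detRowAlternating.compLinearMap (LinearMap.funLeft ℝ ℝ ![a, b, c])
    | _ => 0)

lemma phi3_eval (a b c p q r : Fin 8) :
    phi3 a b c (e p * (e q * e r)) =
      Matrix.det !![dd p a, dd p b, dd p c; dd q a, dd q b, dd q c; dd r a, dd r b, dd r c] := by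
  have h : e p * (e q * e r) = ιMulti ℝ 3 ![Pi.single p 1, Pi.single q 1, Pi.single r 1] := by
    simp [ιMulti_apply, List.ofFn_succ, e, mul_assoc]
  rw [h, phi3, liftAlternating_apply_ιMulti]
  show Matrix.detRowAlternating.compLinearMap (LinearMap.funLeft ℝ ℝ ![a, b, c])
      ![Pi.single p 1, Pi.single q 1, Pi.single r 1] = _
  rw [AlternatingMap.compLinearMap_apply]
  show Matrix.det (Matrix.of fun i => (LinearMap.funLeft ℝ ℝ ![a, b, c])
      (![Pi.single p 1, Pi.single q 1, Pi.single r 1] i)) = _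
  congr 1
  ext i j
  fin_cases i <;> fin_cases j <;> simp [dd, Pi.single_apply, eq_comm]

def phi2 (a b : Fin 8) : ExteriorAlgebra ℝ (Fin 8 → ℝ) →ₗ[ℝ] ℝ :=
  liftAlternating (fun n => match n with
    | 2 => Matrix.detRowAlternating.compLinearMap (LinearMap.funLeft ℝ ℝ ![a, b])
    | _ => 0)

lemma phi2_eval (a b p q : Fin 8) :
    phi2 a b (e p * e q) = Matrix.det !![dd p a, dd p b; dd q a, dd q b] := by
  have h : e p * e q = ιMulti ℝ 2 ![Pi.single p 1, Pi.single q 1] := by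
    simp [ιMulti_apply, List.ofFn_succ, e, mul_assoc]
  rw [h, phi2, liftAlternating_apply_ιMulti]
  show Matrix.detRowAlternating.compLinearMap (LinearMap.funLeft ℝ ℝ ![a, b])
      ![Pi.single p 1, Pi.single q 1] = _
  rw [AlternatingMap.compLinearMap_apply]
  show Matrix.det (Matrix.of fun i => (LinearMap.funLeft ℝ ℝ ![a, b])
      (![Pi.single p 1, Pi.single q 1] i)) = _
  congr 1
  ext i j
  fin_cases i <;> fin_cases j <;> simp [dd, Pi.single_apply, eq_comm]

lemma hD0 : D 0 = 0 := rfl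
lemma hD1 : D 1 = 0 := rfl
lemma hD2 : D 2 = e 0 * e 1 := rfl
lemma hD3 : D 3 = e 0 * e 2 := rfl
lemma hD4 : D 4 = e 0 * e 3 := rfl
lemma hD5 : D 5 = e 0 * e 4 := rfl
lemma hD6 : D 6 = e 0 * e 5 := rfl
lemma hD7 : D 7 = e 2 * e 5 - e 3 * e 4 - e 1 * e 6 := rfl

lemma dOne_apply (ξ : Fin 8 → ℝ) : dOne ξ = ∑ i, ξ i • D i := by
  rw [dOne, Module.Basis.constr_apply_fintype]; simp

set_option maxHeartbeats 2000000 in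
lemma dTwo_eq (k : Fin 8 → Fin 8 → ℝ) :
    dTwo k = (k 1 3 - k 3 1) • (e 0 * (e 1 * e 2)) + (k 1 4 + k 2 3 - k 3 2 - k 4 1) • (e 0 * (e 1 * e 3)) + (k 1 5 + k 2 4 - k 4 2 - k 5 1) • (e 0 * (e 1 * e 4)) + (k 1 6 + k 2 5 - k 5 2 - k 6 1) • (e 0 * (e 1 * e 5)) + (k 0 7 + k 2 6 - k 6 2 - k 7 0) • (e 0 * (e 1 * e 6)) + (k 2 7 - k 7 2) • (e 0 * (e 1 * e 7)) + (k 2 4 - k 4 2) • (e 0 * (e 2 * e 3)) + (k 2 5 + k 3 4 - k 4 3 - k 5 2) • (e 0 * (e 2 * e 4)) + (-k 0 7 + k 2 6 + k 3 5 - k 5 3 - k 6 2 + k 7 0) • (e 0 * (e 2 * e 5)) + (k 3 6 - k 6 3) • (e 0 * (e 2 * e 6)) + (k 3 7 - k 7 3) • (e 0 * (e 2 * e 7)) + (k 0 7 + k 3 5 - k 5 3 - k 7 0) • (e 0 * (e 3 * e 4)) + (k 3 6 + k 4 5 - k 5 4 - k 6 3) • (e 0 * (e 3 * e 5)) + (k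 4 6 - k 6 4) • (e 0 * (e 3 * e 6)) + (k 4 7 - k 7 4) • (e 0 * (e 3 * e 7)) + (k 4 6 - k 6 4) • (e 0 * (e 4 * e 5)) + (k 5 6 - k 6 5) • (e 0 * (e 4 * e 6)) + (k 5 7 - k 7 5) • (e 0 * (e 4 * e 7)) + (k 6 7 - k 7 6) • (e 0 * (e 5 * e 7)) + (-k 1 7 + k 7 1) • (e 1 * (e 2 * e 5)) + (-k 2 7 + k 7 2) • (e 1 * (e 2 * e 6)) + (k 1 7 - k 7 1) • (e 1 * (e 3 * e 4)) + (-k 3 7 + k 7 3) • (e 1 * (e 3 * e 6)) + (-k 4 7 + k 7 4) • (e 1 * (e 4 * e 6)) + (-k 5 7 + k 7 5) • (e 1 * (e 5 * e 6)) + (k 2 7 - k 7 2) • (e 2 * (e 3 * e 4)) + (k 3 7 - k 7 3) • (e 2 * (e 3 * e 5)) + (k 4 7 - k 7 4) • (e 2 * (e 4 * e 5)) + (-k 6 7 + k 7 6) • (e 2 * (e 5 * e 6)) + (k 5 7 - k 7 5) • (e 3 * (e 4 * e 5)) + (k 6 7 - k 7 6) • (e 3 * (e 4 * e 6)) := by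
  simp only [dTwo, Fin.sum_univ_eight, hD0, hD1, hD2, hD3, hD4, hD5, hD6, hD7]
  simp only [mul_assoc, zero_mul, mul_zero, sub_mul, mul_sub, neg_mul, mul_neg, neg_neg, smul_neg, smul_zero, zero_smul, one_smul, neg_smul, smul_add, smul_sub, add_zero, zero_add, sub_zero, zero_sub, neg_zero, esq', esq, esw 0 1, eswx 0 1, esw 0 2, eswx 0 2, esw 0 3, eswx 0 3, esw 0 4, eswx 0 4, esw 0 5, eswx 0 5, esw 0 6, eswx 0 6, esw 0 7, eswx 0 7, esw 1 2, eswx 1 2, esw 1 3, eswx 1 3, esw 1 4, eswx 1 4, esw 1 5, eswx 1 5, esw 1 6, eswx 1 6, esw 1 7, eswx 1 7, esw 2 3, eswx 2 3, esw 2 4, eswx 2 4, esw 2 5, eswx 2 5, esw 2 6, eswx 2 6, esw 2 7, eswx 2 7, esw 3 4, eswx 3 4, esw 3 5, eswx 3 5, esw 3 6, eswx 3 6, esw 3 7, eswx 3 7, esw 4 5, eswx 4 5, esw 4 6, eswx 4 6, esw 4 7, eswx 4 7, esw 5 6, eswx 5 6, esw 5 7, eswx 5 7, esw 6 7, eswx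 6 7]
  module

set_option maxHeartbeats 2000000 in
lemma twoForm_eq (k : Fin 8 → Fin 8 → ℝ) :
    twoForm k = (k 0 1 - k 1 0) • (e 0 * e 1) + (k 0 2 - k 2 0) • (e 0 * e 2) + (k 0 3 - k 3 0) • (e 0 * e 3) + (k 0 4 - k 4 0) • (e 0 * e 4) + (k 0 5 - k 5 0) • (e 0 * e 5) + (k 0 6 - k 6 0) • (e 0 * e 6) + (k 0 7 - k 7 0) • (e 0 * e 7) + (k 1 2 - k 2 1) • (e 1 * e 2) + (k 1 3 - k 3 1) • (e 1 * e 3) + (k 1 4 - k 4 1) • (e 1 * e 4) + (k 1 5 - k 5 1) • (e 1 * e 5) + (k 1 6 - k 6 1) • (e 1 * e 6) + (k 1 7 - k 7 1) • (e 1 * e 7) + (k 2 3 - k 3 2) • (e 2 * e 3) + (k 2 4 - k 4 2) • (e 2 * e 4) + (k 2 5 - k 5 2) • (e 2 * e 5) + (k 2 6 - k 6 2) • (e 2 * e 6) + (k 2 7 - k 7 2) • (e 2 * e 7) + (k 3 4 - k 4 3) • (e 3 * e 4) + (k 3 5 - k 5 3) • (e 3 * e 5) + (k 3 6 - k 6 3)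 • (e 3 * e 6) + (k 3 7 - k 7 3) • (e 3 * e 7) + (k 4 5 - k 5 4) • (e 4 * e 5) + (k 4 6 - k 6 4) • (e 4 * e 6) + (k 4 7 - k 7 4) • (e 4 * e 7) + (k 5 6 - k 6 5) • (e 5 * e 6) + (k 5 7 - k 7 5) • (e 5 * e 7) + (k 6 7 - k 7 6) • (e 6 * e 7) := by
  simp only [twoForm, Fin.sum_univ_eight]
  simp only [mul_assoc, zero_mul, mul_zero, sub_mul, mul_sub, neg_mul, mul_neg, neg_neg, smul_neg, smul_zero, zero_smul, one_smul, neg_smul, smul_add, smul_sub, add_zero, zero_add, sub_zero, zero_sub, neg_zero, esq', esq, esw 0 1, eswx 0 1, esw 0 2, eswx 0 2, esw 0 3, eswx 0 3, esw 0 4, eswx 0 4, esw 0 5, eswx 0 5, esw 0 6, eswx 0 6, esw 0 7, eswx 0 7, esw 1 2, eswx 1 2, esw 1 3, eswx 1 3, esw 1 4, eswx 1 4, esw 1 5, eswx 1 5, esw 1 6, eswx 1 6, esw 1 7, eswx 1 7, esw 2 3, eswx 2 3, esw 2 4, eswx 2 4, esw 2 5, eswx 2 5, esw 2 6, eswx 2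 6, esw 2 7, eswx 2 7, esw 3 4, eswx 3 4, esw 3 5, eswx 3 5, esw 3 6, eswx 3 6, esw 3 7, eswx 3 7, esw 4 5, eswx 4 5, esw 4 6, eswx 4 6, esw 4 7, eswx 4 7, esw 5 6, eswx 5 6, esw 5 7, eswx 5 7, esw 6 7, eswx 6 7]
  module

lemma tf1 : twoForm k1 = e 1 * e 2 := by
  rw [twoForm_eq]; simp [k1]
lemma tf2 : twoForm k2 = e 2 * e 3 - e 1 * e 4 := by
  rw [twoForm_eq]; simp [k2]; module
lemma tf3 : twoForm k3 = e 0 * e 6 := by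
  rw [twoForm_eq]; simp [k3]

set_option maxHeartbeats 2000000 in
/-- the three generators are closed; every closed 2-form is a linear
combination of them plus an exact form; and no nontrivial linear combination of
them is exact.  Hence `H²(g,ℝ)` is 3-dimensional with the stated basis. -/
theorem H2_of_eight_dim_example :
    (dTwo k1 = 0 ∧ dTwo k2 = 0 ∧ dTwo k3 = 0)
    ∧ (∀ k : Fin 8 → Fin 8 → ℝ, dTwo k = 0 →
        ∃ (a b c : ℝ) (ξ : Fin 8 → ℝ),
          twoForm k = a • twoForm k1 + b • twoForm k2 + c • twoForm k3 + dOne ξ)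
    ∧ (∀ (a b c : ℝ) (ξ : Fin 8 → ℝ),
        a • twoForm k1 + b • twoForm k2 + c • twoForm k3 = dOne ξ →
          a = 0 ∧ b = 0 ∧ c = 0) := by
  refine ⟨⟨?_, ?_, ?_⟩, ?_, ?_⟩
  · rw [dTwo_eq]; simp [k1]
  · rw [dTwo_eq]; simp [k2]
  · rw [dTwo_eq]; simp [k3]
  · intro k hk
    rw [dTwo_eq] at hk
    have E0 := congrArg (phi3 0 1 2) hk
    simp only [map_add, map_sub, map_neg, map_smul, map_zero, smul_eq_mul, phi3_eval,
      Matrix.det_fin_three] at E0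
    simp [dd, Matrix.vecHead, Matrix.vecTail] at E0
    have E1 := congrArg (phi3 0 1 3) hk
    simp only [map_add, map_sub, map_neg, map_smul, map_zero, smul_eq_mul, phi3_eval,
      Matrix.det_fin_three] at E1
    simp [dd, Matrix.vecHead, Matrix.vecTail] at E1
    have E2 := congrArg (phi3 0 1 4) hk
    simp only [map_add, map_sub, map_neg, map_smul, map_zero, smul_eq_mul, phi3_eval,
      Matrix.det_fin_three] at E2
    simp [dd, Matrix.vecHead, Matrix.vecTail] at E2
    have E3 := congrArg (phi3 0 1 5) hk
    simp only [map_add, map_sub, map_neg, map_smul, map_zero, smul_eq_mul, phi3_eval,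
      Matrix.det_fin_three] at E3
    simp [dd, Matrix.vecHead, Matrix.vecTail] at E3
    have E4 := congrArg (phi3 0 1 6) hk
    simp only [map_add, map_sub, map_neg, map_smul, map_zero, smul_eq_mul, phi3_eval,
      Matrix.det_fin_three] at E4
    simp [dd, Matrix.vecHead, Matrix.vecTail] at E4
    have E5 := congrArg (phi3 0 1 7) hk
    simp only [map_add, map_sub, map_neg, map_smul, map_zero, smul_eq_mul, phi3_eval,
      Matrix.det_fin_three] at E5
    simp [dd, Matrix.vecHead, Matrix.vecTail] at E5
    have E6 := congrArg (phi3 0 2 3) hk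
    simp only [map_add, map_sub, map_neg, map_smul, map_zero, smul_eq_mul, phi3_eval,
      Matrix.det_fin_three] at E6
    simp [dd, Matrix.vecHead, Matrix.vecTail] at E6
    have E7 := congrArg (phi3 0 2 4) hk
    simp only [map_add, map_sub, map_neg, map_smul, map_zero, smul_eq_mul, phi3_eval,
      Matrix.det_fin_three] at E7
    simp [dd, Matrix.vecHead, Matrix.vecTail] at E7
    have E8 := congrArg (phi3 0 2 5) hk
    simp only [map_add, map_sub, map_neg, map_smul, map_zero, smul_eq_mul, phi3_eval,
      Matrix.det_fin_three] at E8
    simp [dd, Matrix.vecHead, Matrix.vecTail] at E8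
    have E9 := congrArg (phi3 0 2 6) hk
    simp only [map_add, map_sub, map_neg, map_smul, map_zero, smul_eq_mul, phi3_eval,
      Matrix.det_fin_three] at E9
    simp [dd, Matrix.vecHead, Matrix.vecTail] at E9
    have E10 := congrArg (phi3 0 2 7) hk
    simp only [map_add, map_sub, map_neg, map_smul, map_zero, smul_eq_mul, phi3_eval,
      Matrix.det_fin_three] at E10
    simp [dd, Matrix.vecHead, Matrix.vecTail] at E10
    have E11 := congrArg (phi3 0 3 4) hk
    simp only [map_add, map_sub, map_neg, map_smul, map_zero, smul_eq_mul, phi3_eval,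
      Matrix.det_fin_three] at E11
    simp [dd, Matrix.vecHead, Matrix.vecTail] at E11
    have E12 := congrArg (phi3 0 3 5) hk
    simp only [map_add, map_sub, map_neg, map_smul, map_zero, smul_eq_mul, phi3_eval,
      Matrix.det_fin_three] at E12
    simp [dd, Matrix.vecHead, Matrix.vecTail] at E12
    have E13 := congrArg (phi3 0 3 6) hk
    simp only [map_add, map_sub, map_neg, map_smul, map_zero, smul_eq_mul, phi3_eval,
      Matrix.det_fin_three] at E13
    simp [dd, Matrix.vecHead, Matrix.vecTail] at E13
    have E14 := congrArg (phi3 0 3 7) hk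
    simp only [map_add, map_sub, map_neg, map_smul, map_zero, smul_eq_mul, phi3_eval,
      Matrix.det_fin_three] at E14
    simp [dd, Matrix.vecHead, Matrix.vecTail] at E14
    have E15 := congrArg (phi3 0 4 6) hk
    simp only [map_add, map_sub, map_neg, map_smul, map_zero, smul_eq_mul, phi3_eval,
      Matrix.det_fin_three] at E15
    simp [dd, Matrix.vecHead, Matrix.vecTail] at E15
    have E16 := congrArg (phi3 0 4 7) hk
    simp only [map_add, map_sub, map_neg, map_smul, map_zero, smul_eq_mul, phi3_eval,
      Matrix.det_fin_three] at E16
    simp [dd, Matrix.vecHead, Matrix.vecTail] at E16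
    have E17 := congrArg (phi3 0 5 7) hk
    simp only [map_add, map_sub, map_neg, map_smul, map_zero, smul_eq_mul, phi3_eval,
      Matrix.det_fin_three] at E17
    simp [dd, Matrix.vecHead, Matrix.vecTail] at E17
    have E18 := congrArg (phi3 1 2 5) hk
    simp only [map_add, map_sub, map_neg, map_smul, map_zero, smul_eq_mul, phi3_eval,
      Matrix.det_fin_three] at E18
    simp [dd, Matrix.vecHead, Matrix.vecTail] at E18
    refine ⟨k 1 2 - k 2 1, k 2 3 - k 3 2, k 0 6 - k 6 0,
      (fun i => if i = 2 then k 0 1 - k 1 0 else if i = 3 then k 0 2 - k 2 0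
        else if i = 4 then k 0 3 - k 3 0 else if i = 5 then k 0 4 - k 4 0
        else if i = 6 then k 0 5 - k 5 0 else if i = 7 then -(k 1 6 - k 6 1) else 0), ?_⟩
    rw [twoForm_eq, tf1, tf2, tf3, dOne_apply]
    simp only [Fin.sum_univ_eight, hD0, hD1, hD2, hD3, hD4, hD5, hD6, hD7]
    simp only [Fin.reduceEq, reduceIte, zero_smul, zero_add, add_zero]
    match_scalars <;> linarith [E0, E1, E2, E3, E4, E5, E6, E7, E8, E9, E10, E11, E12, E13, E14, E15, E16, E17, E18]
  · intro a b c ξ h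
    rw [tf1, tf2, tf3, dOne_apply] at h
    simp only [Fin.sum_univ_eight, hD0, hD1, hD2, hD3, hD4, hD5, hD6, hD7] at h
    have HA := congrArg (phi2 1 2) h
    have HB := congrArg (phi2 2 3) h
    have HC := congrArg (phi2 0 6) h
    simp only [map_add, map_sub, map_neg, map_smul, map_zero, smul_eq_mul, phi2_eval,
      Matrix.det_fin_two] at HA HB HC
    simp [dd, Matrix.vecHead, Matrix.vecTail] at HA HB HC
    refine ⟨by linarith, by linarith, by linarith⟩


end
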